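/- Let Q be a Hermitian operator on ℂ^d with spectral diameter Σ(Q) > 0, let γ be a density matrix on ℂ^d, set v := Tr(γ Q), and fix η > 0 and N ≥ 1. Let Π denote the spectral projector of the average operator Q̄ on (ℂ^d)^{⊗N} onto the direct sum of its eigenspaces with eigenvalue in [v − η Σ(Q), v + η Σ(Q)]. Then Tr(γ^{⊗N} Π) ≥ 1 − 2 e^{−2 η² N}. -/

import Mathlib

open Matrix BigOperators
open scoped ComplexOrder

/-- Functional calculus for a Hermitian matrix: apply `f` to the eigenvalues.
(Returns `0` if the matrix is not Hermitian.) -/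
noncomputable def matFun {n : Type*} [Fintype n] [DecidableEq n]
    (f : ℝ → ℝ) (A : Matrix n n ℂ) : Matrix n n ℂ :=
  if hA : A.IsHermitian then
    (hA.eigenvectorUnitary : Matrix n n ℂ) *
      Matrix.diagonal (fun i => (f (hA.eigenvalues i) : ℂ)) *
      (star hA.eigenvectorUnitary : Matrix n n ℂ)
  else 0

/-- Spectral projector of a Hermitian matrix onto the direct sum of the
eigenspaces with eigenvalue in the closed interval `[a, b]`. -/
noncomputable def specProj {n : Type*} [Fintype n] [DecidableEq n]
    (A : Matrix n n ℂ) (a b : ℝ) : Matrix n n ℂ :=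
  matFun (Set.indicator (Set.Icc a b) fun _ => (1 : ℝ)) A

/-- Largest eigenvalue of a Hermitian matrix. -/
noncomputable def eigMax {n : Type*} [Fintype n] [DecidableEq n]
    (A : Matrix n n ℂ) : ℝ :=
  if hA : A.IsHermitian then ⨆ i, hA.eigenvalues i else 0

/-- Smallest eigenvalue of a Hermitian matrix. -/
noncomputable def eigMin {n : Type*} [Fintype n] [DecidableEq n]
    (A : Matrix n n ℂ) : ℝ :=
  if hA : A.IsHermitian then ⨅ i, hA.eigenvalues i else 0

/-- Spectral diameter `Σ(A) = λ_max(A) - λ_min(A)` of a Hermitian matrix. -/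
noncomputable def specDiam {n : Type*} [Fintype n] [DecidableEq n]
    (A : Matrix n n ℂ) : ℝ :=
  eigMax A - eigMin A

/-- Operator norm `‖A‖_∞` of a Hermitian matrix: the largest absolute value
of an eigenvalue. -/
noncomputable def opNorm {n : Type*} [Fintype n] [DecidableEq n]
    (A : Matrix n n ℂ) : ℝ :=
  if hA : A.IsHermitian then ⨆ i, |hA.eigenvalues i| else 0

/-- The single-site operator `I^{⊗ℓ} ⊗ Q ⊗ I^{⊗(N-1-ℓ)}` on `(ℂ^d)^{⊗N}`. -/
noncomputable def siteOp {d : ℕ} (Q : Matrix (Fin d) (Fin d) ℂ) (N : ℕ) (ℓ : Fin N) :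
    Matrix (Fin N → Fin d) (Fin N → Fin d) ℂ :=
  Matrix.of fun x y =>
    (∏ k ∈ Finset.univ.erase ℓ, if x k = y k then (1 : ℂ) else 0) * Q (x ℓ) (y ℓ)

/-- The average operator `Q̄ := (1/N) Σ_ℓ I^{⊗ℓ} ⊗ Q ⊗ I^{⊗(N-1-ℓ)}` on `(ℂ^d)^{⊗N}`. -/
noncomputable def avgOp {d : ℕ} (Q : Matrix (Fin d) (Fin d) ℂ) (N : ℕ) :
    Matrix (Fin N → Fin d) (Fin N → Fin d) ℂ :=
  (N : ℂ)⁻¹ • ∑ ℓ : Fin N, siteOp Q N ℓ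

/-- The `N`-fold tensor power `ρ^{⊗N}` on `(ℂ^d)^{⊗N}`. -/
noncomputable def tensorPow {d : ℕ} (ρ : Matrix (Fin d) (Fin d) ℂ) (N : ℕ) :
    Matrix (Fin N → Fin d) (Fin N → Fin d) ℂ :=
  Matrix.of fun x y => ∏ ℓ, ρ (x ℓ) (y ℓ)

/-- The reduced state on the `ℓ`-th tensor factor: partial trace over all
tensor factors except the `ℓ`-th. -/
noncomputable def reduceAt {d N : ℕ}
    (Ω : Matrix (Fin N → Fin d) (Fin N → Fin d) ℂ) (ℓ : Fin N) :
    Matrix (Fin d) (Fin d) ℂ :=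
  Matrix.of fun a b =>
    ∑ x ∈ Finset.univ.filter (fun x : Fin N → Fin d => x ℓ = a),
      Ω x (Function.update x ℓ b)

/-- Quantum relative entropy `D(ρ‖σ) = Tr(ρ (log ρ - log σ))`, with the
convention `log 0 = 0` (so `0 log 0 = 0` on the kernel of `ρ`). -/
noncomputable def relEnt {n : Type*} [Fintype n] [DecidableEq n]
    (ρ σ : Matrix n n ℂ) : ℝ :=
  (Matrix.trace (ρ * (matFun Real.log ρ - matFun Real.log σ))).re

/-- Trace norm `‖A‖₁ = Tr √(AᴴA)`. -/
noncomputable def traceNorm {n : Type*} [Fintype n] [DecidableEq n]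
    (A : Matrix n n ℂ) : ℝ :=
  (Matrix.trace
    (((Matrix.posSemidef_conjTranspose_mul_self A).1.eigenvectorUnitary : Matrix n n ℂ) *
      Matrix.diagonal ((fun x : ℝ => ((Real.sqrt x : ℝ) : ℂ)) ∘
        (Matrix.posSemidef_conjTranspose_mul_self A).1.eigenvalues) *
      (star (Matrix.posSemidef_conjTranspose_mul_self A).1.eigenvectorUnitary :
        Matrix n n ℂ))).re

/-- Matrix exponential, defined by the power series. -/
noncomputable def matExp {n : Type*} [Fintype n] [DecidableEq n]
    (A : Matrix n n ℂ) : Matrix n n ℂ :=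
  ∑' k : ℕ, ((k.factorial : ℂ)⁻¹) • A ^ k


-- ### Auxiliary lemmas

open Real in
lemma hoeffding_kernel (θ : ℝ) (hθ0 : 0 ≤ θ) (hθ1 : θ ≤ 1) (h : ℝ) :
    (1 - θ) * Real.exp (-θ * h) + θ * Real.exp ((1 - θ) * h) ≤ Real.exp (h ^ 2 / 8) := by
  set D : ℝ → ℝ := fun u => 1 - θ + θ * Real.exp u with hD_def
  have hD : ∀ u, 0 < D u := by
    intro u
    rcases eq_or_lt_of_le hθ0 with h0 | h0
    · simp [hD_def, ← h0]
    · have := Real.exp_pos u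
      have : 0 < θ * Real.exp u := by positivity
      simp only [hD_def]; linarith
  set L : ℝ → ℝ := fun u => Real.log (D u) - θ * u with hL_def
  set G : ℝ → ℝ := fun u => u / 4 + θ - θ * Real.exp u / D u with hG_def
  set g : ℝ → ℝ := fun u => u ^ 2 / 8 - L u with hg_def
  have hDd : ∀ u, HasDerivAt D (θ * Real.exp u) u := by
    intro u
    exact ((Real.hasDerivAt_exp u).const_mul θ).const_add (1 - θ)
  have hLd : ∀ u, HasDerivAt L (θ * Real.exp u / D u - θ) u := by
    intro u
    exact ((hDd u).log (hD u).ne').sub ((hasDerivAt_id u).const_mul θ |>.congr_deriv (by ring))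
  have hgd : ∀ u, HasDerivAt g (G u) u := by
    intro u
    have h1 : HasDerivAt (fun u : ℝ => u ^ 2 / 8) (u / 4) u := by
      simpa using (hasDerivAt_pow 2 u).div_const 8 |>.congr_deriv (by ring)
    exact (h1.sub (hLd u)).congr_deriv (by simp [hG_def]; ring)
  have hGd : ∀ u, HasDerivAt G (1 / 4 - θ * Real.exp u * (1 - θ) / (D u) ^ 2) u := by
    intro u
    have h1 : HasDerivAt (fun u : ℝ => u / 4 + θ) (1 / 4) u := by
      simpa using ((hasDerivAt_id u).div_const 4).add_const θ
    have h2 : HasDerivAt (fun u => θ * Real.exp u / D u)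
        ((θ * Real.exp u * D u - θ * Real.exp u * (θ * Real.exp u)) / (D u) ^ 2) u :=
      ((Real.hasDerivAt_exp u).const_mul θ).div (hDd u) (hD u).ne'
    refine (h1.sub h2).congr_deriv ?_
    have : D u = 1 - θ + θ * Real.exp u := rfl
    field_simp
    ring
  have hGmono : Monotone G := by
    refine monotone_of_deriv_nonneg (fun u => (hGd u).differentiableAt) ?_
    intro u
    rw [(hGd u).deriv]
    have hpos : (0:ℝ) < (D u) ^ 2 := pow_pos (hD u) 2
    rw [sub_nonneg, div_le_iff₀ hpos]
    have : D u = 1 - θ + θ * Real.exp u := rfl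
    nlinarith [sq_nonneg ((1 - θ) - θ * Real.exp u), Real.exp_pos u]
  have hG0 : G 0 = 0 := by
    simp [hG_def, hD_def]
  have hg0 : g 0 = 0 := by
    simp [hg_def, hL_def, hD_def]
  have hgc : Continuous g := by
    have : Differentiable ℝ g := fun u => (hgd u).differentiableAt
    exact this.continuous
  have key : ∀ u, 0 ≤ g u := by
    intro u
    rcases le_total 0 u with hu | hu
    · have hmono : MonotoneOn g (Set.Ici (0:ℝ)) := by
        refine monotoneOn_of_deriv_nonneg (convex_Ici 0) hgc.continuousOn
          (fun x _ => (hgd x).differentiableAt.differentiableWithinAt) ?_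
        intro x hx
        rw [(hgd x).deriv]
        rw [interior_Ici] at hx
        have := hGmono (le_of_lt hx)
        rw [hG0] at this
        linarith
      have := hmono Set.self_mem_Ici hu hu
      rwa [hg0] at this
    · have hmono : AntitoneOn g (Set.Iic (0:ℝ)) := by
        refine antitoneOn_of_deriv_nonpos (convex_Iic 0) hgc.continuousOn
          (fun x _ => (hgd x).differentiableAt.differentiableWithinAt) ?_
        intro x hx
        rw [(hgd x).deriv]
        rw [interior_Iic] at hx
        have := hGmono (le_of_lt hx)
        rw [hG0] at this
        linarith
      have := hmono hu Set.self_mem_Iic hu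
      rwa [hg0] at this
    -- done
  have hL : L h ≤ h ^ 2 / 8 := by have := key h; simp [hg_def] at this; linarith
  have lhs_eq : (1 - θ) * Real.exp (-θ * h) + θ * Real.exp ((1 - θ) * h)
      = Real.exp (L h) := by
    rw [hL_def]
    simp only
    rw [Real.exp_sub, Real.exp_log (hD h), eq_div_iff (Real.exp_ne_zero _)]
    have e1 : Real.exp (-θ * h) * Real.exp (θ * h) = 1 := by
      rw [← Real.exp_add]; simp
    have e2 : Real.exp ((1 - θ) * h) * Real.exp (θ * h) = Real.exp h := by
      rw [← Real.exp_add]; ring_nf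
    simp only [hD_def]
    linear_combination (1 - θ) * e1 + θ * e2
  rw [lhs_eq]
  exact Real.exp_le_exp.mpr hL

/-- Hoeffding's lemma (moment generating function bound) for a finite distribution. -/
lemma hoeffding_mgf {d : ℕ} (p lam : Fin d → ℝ) (hp : ∀ i, 0 ≤ p i)
    (hp1 : ∑ i, p i = 1) (m M : ℝ) (hm : ∀ i, m ≤ lam i) (hM : ∀ i, lam i ≤ M)
    (hs : 0 < M - m) (v : ℝ) (hv : v = ∑ i, p i * lam i) (t : ℝ) :
    ∑ i, p i * Real.exp (t * (lam i - v)) ≤ Real.exp (t ^ 2 * (M - m) ^ 2 / 8) := by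
  have hvm : m ≤ v := by
    have h1 : ∑ i, p i * m ≤ ∑ i, p i * lam i :=
      Finset.sum_le_sum fun i _ => mul_le_mul_of_nonneg_left (hm i) (hp i)
    rw [← Finset.sum_mul, hp1, one_mul] at h1; rw [hv]; exact h1
  have hvM : v ≤ M := by
    have h1 : ∑ i, p i * lam i ≤ ∑ i, p i * M :=
      Finset.sum_le_sum fun i _ => mul_le_mul_of_nonneg_left (hM i) (hp i)
    rw [← Finset.sum_mul, hp1, one_mul] at h1; rw [hv]; exact h1
  set θ : ℝ := (v - m) / (M - m) with hθ_def
  have hθ0 : 0 ≤ θ := div_nonneg (by linarith) hs.le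
  have hθ1 : θ ≤ 1 := by rw [div_le_one hs]; linarith
  set h : ℝ := t * (M - m) with hh_def
  -- pointwise convexity bound
  have step1 : ∀ i, p i * Real.exp (t * (lam i - v)) ≤
      p i * ((M - lam i) / (M - m) * Real.exp (t * (m - v)) +
        (lam i - m) / (M - m) * Real.exp (t * (M - v))) := by
    intro i
    refine mul_le_mul_of_nonneg_left ?_ (hp i)
    have ha : 0 ≤ (M - lam i) / (M - m) := div_nonneg (by linarith [hM i]) hs.le
    have hb : 0 ≤ (lam i - m) / (M - m) := div_nonneg (by linarith [hm i]) hs.le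
    have hab : (M - lam i) / (M - m) + (lam i - m) / (M - m) = 1 := by
      field_simp; ring
    have hcomb : (M - lam i) / (M - m) * (t * (m - v)) +
        (lam i - m) / (M - m) * (t * (M - v)) = t * (lam i - v) := by
      field_simp
      ring
    have := convexOn_exp.2 (Set.mem_univ (t * (m - v))) (Set.mem_univ (t * (M - v)))
      ha hb hab
    simp only [smul_eq_mul] at this
    rw [hcomb] at this
    exact this
  have step2 : ∑ i, p i * Real.exp (t * (lam i - v)) ≤
      (1 - θ) * Real.exp (-θ * h) + θ * Real.exp ((1 - θ) * h) := by
    refine (Finset.sum_le_sum fun i _ => step1 i).trans_eq ?_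
    have e1 : t * (m - v) = -θ * h := by rw [hθ_def, hh_def]; field_simp; ring
    have e2 : t * (M - v) = (1 - θ) * h := by
      rw [hθ_def, hh_def]; field_simp; ring
    rw [e1, e2]
    have expand : ∀ i, p i * ((M - lam i) / (M - m) * Real.exp (-θ * h) +
        (lam i - m) / (M - m) * Real.exp ((1 - θ) * h)) =
        (p i * (M - lam i) / (M - m)) * Real.exp (-θ * h) +
        (p i * (lam i - m) / (M - m)) * Real.exp ((1 - θ) * h) := by
      intro i; ring
    simp only [expand]
    rw [Finset.sum_add_distrib, ← Finset.sum_mul, ← Finset.sum_mul]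
    have s1 : ∑ i, p i * (M - lam i) / (M - m) = 1 - θ := by
      rw [← Finset.sum_div]
      have : ∑ i, p i * (M - lam i) = M - v := by
        simp only [mul_sub]
        rw [Finset.sum_sub_distrib, ← Finset.sum_mul, hp1, one_mul, hv]
      rw [this, hθ_def]; field_simp; ring
    have s2 : ∑ i, p i * (lam i - m) / (M - m) = θ := by
      rw [← Finset.sum_div]
      have : ∑ i, p i * (lam i - m) = v - m := by
        simp only [mul_sub]
        rw [Finset.sum_sub_distrib, ← Finset.sum_mul, hp1, one_mul, hv]
      rw [this, hθ_def]
    rw [s1, s2]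
  refine step2.trans ?_
  have := hoeffding_kernel θ hθ0 hθ1 h
  refine this.trans_eq ?_
  rw [hh_def]
  ring_nf

lemma sum_prod_swap {d N : ℕ} (F : Fin N → Fin d → ℝ) :
    ∑ x : Fin N → Fin d, ∏ ℓ, F ℓ (x ℓ) = ∏ ℓ, ∑ j, F ℓ j := by
  rw [Finset.prod_univ_sum]
  rw [Fintype.piFinset_univ]

/-- One-sided Hoeffding tail bound for i.i.d. sampling from a finite distribution. -/
lemma hoeffding_tail {d N : ℕ} (hN : 1 ≤ N) (p lam : Fin d → ℝ) (hp : ∀ i, 0 ≤ p i)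
    (hp1 : ∑ i, p i = 1) (m M : ℝ) (hm : ∀ i, m ≤ lam i) (hM : ∀ i, lam i ≤ M)
    (hs : 0 < M - m) (v : ℝ) (hv : v = ∑ i, p i * lam i) (η : ℝ) (hη : 0 < η) :
    ∑ x : Fin N → Fin d,
      (if v + η * (M - m) < (N : ℝ)⁻¹ * ∑ ℓ, lam (x ℓ) then (1:ℝ) else 0) * ∏ ℓ, p (x ℓ)
      ≤ Real.exp (-2 * η ^ 2 * N) := by
  set s : ℝ := M - m with hs_def
  set t : ℝ := 4 * η / s with ht_def
  have ht : 0 < t := by positivity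
  have hNpos : (0:ℝ) < N := by exact_mod_cast hN
  have stepA : ∀ x : Fin N → Fin d,
      (if v + η * s < (N : ℝ)⁻¹ * ∑ ℓ, lam (x ℓ) then (1:ℝ) else 0) * ∏ ℓ, p (x ℓ) ≤
      Real.exp (t * ((∑ ℓ, lam (x ℓ)) - N * (v + η * s))) * ∏ ℓ, p (x ℓ) := by
    intro x
    have hP : 0 ≤ ∏ ℓ, p (x ℓ) := Finset.prod_nonneg fun ℓ _ => hp (x ℓ)
    split_ifs with hc
    · refine mul_le_mul_of_nonneg_right ?_ hP
      refine Real.one_le_exp ?_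
      have h1 : (N : ℝ) * (v + η * s) ≤ ∑ ℓ, lam (x ℓ) := by
        rw [inv_mul_eq_div, lt_div_iff₀ hNpos] at hc
        linarith [hc]
      have h2 : (0:ℝ) ≤ (∑ ℓ, lam (x ℓ)) - N * (v + η * s) := by linarith
      exact mul_nonneg ht.le h2
    · have := Real.exp_pos (t * ((∑ ℓ, lam (x ℓ)) - N * (v + η * s)))
      nlinarith [hP]
  have stepB : ∀ x : Fin N → Fin d,
      Real.exp (t * ((∑ ℓ, lam (x ℓ)) - N * (v + η * s))) =
      Real.exp (-(t * N * η * s)) * ∏ ℓ, Real.exp (t * (lam (x ℓ) - v)) := by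
    intro x
    rw [← Real.exp_sum, ← Real.exp_add]
    congr 1
    have : ∑ ℓ : Fin N, t * (lam (x ℓ) - v) =
        t * (∑ ℓ, lam (x ℓ)) - N * (t * v) := by
      simp only [mul_sub, Finset.sum_sub_distrib, ← Finset.mul_sum, Finset.sum_const,
        Finset.card_univ, Fintype.card_fin, nsmul_eq_mul]
      ring
    rw [this]
    ring
  have mgf := hoeffding_mgf p lam hp hp1 m M hm hM hs v hv t
  have mgf_nonneg : 0 ≤ ∑ i, p i * Real.exp (t * (lam i - v)) :=
    Finset.sum_nonneg fun i _ => mul_nonneg (hp i) (Real.exp_pos _).le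
  calc ∑ x : Fin N → Fin d,
        (if v + η * s < (N : ℝ)⁻¹ * ∑ ℓ, lam (x ℓ) then (1:ℝ) else 0) * ∏ ℓ, p (x ℓ)
      ≤ ∑ x : Fin N → Fin d,
        Real.exp (t * ((∑ ℓ, lam (x ℓ)) - N * (v + η * s))) * ∏ ℓ, p (x ℓ) :=
        Finset.sum_le_sum fun x _ => stepA x
    _ = Real.exp (-(t * N * η * s)) *
        ∑ x : Fin N → Fin d, ∏ ℓ, (Real.exp (t * (lam (x ℓ) - v)) * p (x ℓ)) := by
        rw [Finset.mul_sum]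
        refine Finset.sum_congr rfl fun x _ => ?_
        rw [stepB x, Finset.prod_mul_distrib, mul_assoc]
    _ = Real.exp (-(t * N * η * s)) *
        (∑ i, Real.exp (t * (lam i - v)) * p i) ^ N := by
        congr 1
        rw [sum_prod_swap (fun ℓ j => Real.exp (t * (lam j - v)) * p j)]
        rw [Finset.prod_const, Finset.card_univ, Fintype.card_fin]
    _ ≤ Real.exp (-(t * N * η * s)) * Real.exp (t ^ 2 * s ^ 2 / 8) ^ N := by
        refine mul_le_mul_of_nonneg_left ?_ (Real.exp_pos _).le
        refine pow_le_pow_left₀ ?_ ?_ N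
        · refine Finset.sum_nonneg fun i _ => mul_nonneg (Real.exp_pos _).le (hp i)
        · refine le_of_eq_of_le ?_ mgf
          exact Finset.sum_congr rfl fun i _ => mul_comm _ _
    _ = Real.exp (-2 * η ^ 2 * N) := by
        rw [← Real.exp_nat_mul, ← Real.exp_add]
        congr 1
        have hs0 : s ≠ 0 := ne_of_gt hs
        rw [ht_def]
        field_simp
        ring

/-- Classical Hoeffding inequality for i.i.d. sampling from a finite distribution. -/
lemma classical_hoeffding {d N : ℕ} (hN : 1 ≤ N) (p lam : Fin d → ℝ) (hp : ∀ i, 0 ≤ p i)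
    (hp1 : ∑ i, p i = 1) (m M : ℝ) (hm : ∀ i, m ≤ lam i) (hM : ∀ i, lam i ≤ M)
    (hs : 0 < M - m) (v : ℝ) (hv : v = ∑ i, p i * lam i) (η : ℝ) (hη : 0 < η) :
    1 - 2 * Real.exp (-2 * η ^ 2 * N) ≤
      ∑ x : Fin N → Fin d,
        (if (N : ℝ)⁻¹ * ∑ ℓ, lam (x ℓ) ∈
            Set.Icc (v - η * (M - m)) (v + η * (M - m)) then (1:ℝ) else 0) *
          ∏ ℓ, p (x ℓ) := by
  have hP : ∀ x : Fin N → Fin d, 0 ≤ ∏ ℓ, p (x ℓ) :=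
    fun x => Finset.prod_nonneg fun ℓ _ => hp (x ℓ)
  have hsum1 : ∑ x : Fin N → Fin d, ∏ ℓ, p (x ℓ) = 1 := by
    rw [sum_prod_swap (fun _ j => p j)]
    simp [hp1]
  have T1 := hoeffding_tail hN p lam hp hp1 m M hm hM hs v hv η hη
  have T2 : ∑ x : Fin N → Fin d,
      (if (N : ℝ)⁻¹ * ∑ ℓ, lam (x ℓ) < v - η * (M - m) then (1:ℝ) else 0) * ∏ ℓ, p (x ℓ)
      ≤ Real.exp (-2 * η ^ 2 * N) := by
    have hT := hoeffding_tail hN p (fun i => -lam i) hp hp1 (-M) (-m)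
      (fun i => neg_le_neg (hM i)) (fun i => neg_le_neg (hm i))
      (by linarith) (-v) (by rw [hv]; simp [Finset.sum_neg_distrib, mul_neg]) η hη
    refine le_trans (le_of_eq ?_) hT
    refine Finset.sum_congr rfl fun x _ => ?_
    congr 1
    have hiff : ((N : ℝ)⁻¹ * ∑ ℓ, lam (x ℓ) < v - η * (M - m)) ↔
        (-v + η * (-m - -M) < (N : ℝ)⁻¹ * ∑ ℓ, -lam (x ℓ)) := by
      rw [Finset.sum_neg_distrib, mul_neg]
      constructor <;> intro <;> linarith
    exact if_congr hiff rfl rfl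
  have key : ∀ x : Fin N → Fin d,
      (if (N : ℝ)⁻¹ * ∑ ℓ, lam (x ℓ) ∈
          Set.Icc (v - η * (M - m)) (v + η * (M - m)) then (1:ℝ) else 0) =
      1 - (if v + η * (M - m) < (N : ℝ)⁻¹ * ∑ ℓ, lam (x ℓ) then (1:ℝ) else 0)
        - (if (N : ℝ)⁻¹ * ∑ ℓ, lam (x ℓ) < v - η * (M - m) then (1:ℝ) else 0) := by
    intro x
    set u : ℝ := (N : ℝ)⁻¹ * ∑ ℓ, lam (x ℓ)
    have hab : v - η * (M - m) ≤ v + η * (M - m) := by nlinarith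
    by_cases h1 : v + η * (M - m) < u
    · rw [if_pos h1, if_neg (by simp [Set.mem_Icc]; intro; linarith),
        if_neg (by linarith)]
      norm_num
    · by_cases h2 : u < v - η * (M - m)
      · rw [if_pos h2, if_neg h1, if_neg (by simp [Set.mem_Icc]; intro; linarith)]
        norm_num
      · rw [if_neg h1, if_neg h2, if_pos (Set.mem_Icc.mpr ⟨by linarith, by linarith⟩)]
        norm_num
  have heq : ∑ x : Fin N → Fin d,
      (if (N : ℝ)⁻¹ * ∑ ℓ, lam (x ℓ) ∈
          Set.Icc (v - η * (M - m)) (v + η * (M - m)) then (1:ℝ) else 0) * ∏ ℓ, p (x ℓ)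
      = 1 - (∑ x : Fin N → Fin d,
          (if v + η * (M - m) < (N : ℝ)⁻¹ * ∑ ℓ, lam (x ℓ) then (1:ℝ) else 0) * ∏ ℓ, p (x ℓ))
        - (∑ x : Fin N → Fin d,
          (if (N : ℝ)⁻¹ * ∑ ℓ, lam (x ℓ) < v - η * (M - m) then (1:ℝ) else 0) * ∏ ℓ, p (x ℓ)) := by
    calc ∑ x : Fin N → Fin d,
        (if (N : ℝ)⁻¹ * ∑ ℓ, lam (x ℓ) ∈
            Set.Icc (v - η * (M - m)) (v + η * (M - m)) then (1:ℝ) else 0) * ∏ ℓ, p (x ℓ)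
        = ∑ x : Fin N → Fin d, ((∏ ℓ, p (x ℓ)) -
            (if v + η * (M - m) < (N : ℝ)⁻¹ * ∑ ℓ, lam (x ℓ) then (1:ℝ) else 0) * ∏ ℓ, p (x ℓ) -
            (if (N : ℝ)⁻¹ * ∑ ℓ, lam (x ℓ) < v - η * (M - m) then (1:ℝ) else 0) * ∏ ℓ, p (x ℓ)) :=
          Finset.sum_congr rfl fun x _ => by rw [key x]; ring
      _ = _ := by rw [Finset.sum_sub_distrib, Finset.sum_sub_distrib, hsum1]
  linarith

lemma matFun_unitary_diag {n : Type*} [Fintype n] [DecidableEq n]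
    (V : Matrix n n ℂ) (hV : V ∈ Matrix.unitaryGroup n ℂ) (μ : n → ℝ) (f : ℝ → ℝ) :
    matFun f (V * Matrix.diagonal (fun i => (μ i : ℂ)) * Vᴴ) =
      V * Matrix.diagonal (fun i => (f (μ i) : ℂ)) * Vᴴ := by
  set A := V * Matrix.diagonal (fun i => (μ i : ℂ)) * Vᴴ with hA_def
  have hdiagH : ∀ (c : n → ℝ),
      (Matrix.diagonal (fun i => ((c i : ℂ))))ᴴ = Matrix.diagonal (fun i => ((c i : ℂ))) := by
    intro c
    rw [Matrix.diagonal_conjTranspose]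
    have : (star fun i => ((c i : ℂ))) = fun i => ((c i : ℂ)) := by
      funext i
      simp [Complex.conj_ofReal]
    rw [this]
  have hA : A.IsHermitian := by
    rw [hA_def]
    apply Matrix.isHermitian_mul_mul_conjTranspose
    exact hdiagH μ
  rw [matFun, dif_pos hA]
  set U : Matrix n n ℂ := (hA.eigenvectorUnitary : Matrix n n ℂ) with hU_def
  have hUmem : U ∈ Matrix.unitaryGroup n ℂ := hA.eigenvectorUnitary.2
  have hUU : U * Uᴴ = 1 := by
    have := (Matrix.mem_unitaryGroup_iff).mp hUmem
    rwa [Matrix.star_eq_conjTranspose] at this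
  have hUU' : Uᴴ * U = 1 := by
    have := (Matrix.mem_unitaryGroup_iff').mp hUmem
    rwa [Matrix.star_eq_conjTranspose] at this
  have hVV : V * Vᴴ = 1 := by
    have := (Matrix.mem_unitaryGroup_iff).mp hV
    rwa [Matrix.star_eq_conjTranspose] at this
  have hVV' : Vᴴ * V = 1 := by
    have := (Matrix.mem_unitaryGroup_iff').mp hV
    rwa [Matrix.star_eq_conjTranspose] at this
  set Dμ := Matrix.diagonal (fun i => (μ i : ℂ)) with hDμ_def
  set DE := Matrix.diagonal (fun i => (hA.eigenvalues i : ℂ)) with hDE_def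
  have hspec : A = U * DE * Uᴴ := by
    have := hA.spectral_theorem
    rw [this, Unitary.conjStarAlgAut_apply]; rfl
  set W := Vᴴ * U with hW_def
  have hinter : Dμ * W = W * DE := by
    calc Dμ * W = Dμ * Vᴴ * U := by rw [mul_assoc]
      _ = (Vᴴ * V) * Dμ * Vᴴ * U := by rw [hVV', one_mul]
      _ = Vᴴ * A * U := by rw [hA_def]; simp only [mul_assoc]
      _ = Vᴴ * (U * DE * (Uᴴ * U)) := by rw [hspec]; simp only [mul_assoc]
      _ = Vᴴ * U * DE := by rw [hUU', mul_one, mul_assoc]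
  have hinterf : Matrix.diagonal (fun i => (f (μ i) : ℂ)) * W =
      W * Matrix.diagonal (fun i => (f (hA.eigenvalues i) : ℂ)) := by
    ext i j
    have h2 : (μ i : ℂ) * W i j = W i j * (hA.eigenvalues j : ℂ) := by
      rw [← Matrix.ext_iff] at hinter
      have h3 := hinter i j
      rw [hDμ_def, hDE_def, Matrix.diagonal_mul, Matrix.mul_diagonal] at h3
      exact h3
    rw [Matrix.diagonal_mul, Matrix.mul_diagonal]
    rcases mul_eq_zero.mp (show ((μ i : ℂ) - (hA.eigenvalues j : ℂ)) * W i j = 0 by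
        linear_combination h2) with h | h
    · have hμ : μ i = hA.eigenvalues j := by
        have : (μ i : ℂ) = (hA.eigenvalues j : ℂ) := by linear_combination h
        exact_mod_cast this
      rw [hμ]
      ring
    · rw [h]
      ring
  calc U * Matrix.diagonal (fun i => (f (hA.eigenvalues i) : ℂ)) * Uᴴ
      = V * (W * Matrix.diagonal (fun i => (f (hA.eigenvalues i) : ℂ))) * Uᴴ := by
        rw [hW_def, ← mul_assoc, ← mul_assoc, hVV, one_mul]
    _ = V * (Matrix.diagonal (fun i => (f (μ i) : ℂ)) * W) * Uᴴ := by rw [hinterf]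
    _ = V * Matrix.diagonal (fun i => (f (μ i) : ℂ)) * (Vᴴ * (U * Uᴴ)) := by
        rw [hW_def]; noncomm_ring
    _ = V * Matrix.diagonal (fun i => (f (μ i) : ℂ)) * Vᴴ := by
        rw [hUU, mul_one]

/-- Generic tensor product of a family of matrices. -/
noncomputable def gt {d N : ℕ} (A : Fin N → Matrix (Fin d) (Fin d) ℂ) :
    Matrix (Fin N → Fin d) (Fin N → Fin d) ℂ :=
  Matrix.of fun x y => ∏ ℓ, A ℓ (x ℓ) (y ℓ)

lemma gt_mul {d N : ℕ} (A B : Fin N → Matrix (Fin d) (Fin d) ℂ) :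
    gt A * gt B = gt (fun ℓ => A ℓ * B ℓ) := by
  ext x y
  simp only [gt, Matrix.mul_apply, Matrix.of_apply]
  rw [← Fintype.piFinset_univ]
  calc ∑ z ∈ Fintype.piFinset (fun _ : Fin N => (Finset.univ : Finset (Fin d))),
        (∏ ℓ, A ℓ (x ℓ) (z ℓ)) * ∏ ℓ, B ℓ (z ℓ) (y ℓ)
      = ∑ z ∈ Fintype.piFinset (fun _ : Fin N => (Finset.univ : Finset (Fin d))),
        ∏ ℓ, (A ℓ (x ℓ) (z ℓ) * B ℓ (z ℓ) (y ℓ)) :=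
        Finset.sum_congr rfl fun z _ => (Finset.prod_mul_distrib).symm
    _ = ∏ ℓ, ∑ j, A ℓ (x ℓ) j * B ℓ j (y ℓ) :=
        (Finset.prod_univ_sum (fun _ => Finset.univ)
          (fun ℓ j => A ℓ (x ℓ) j * B ℓ j (y ℓ))).symm

lemma gt_conjTranspose {d N : ℕ} (A : Fin N → Matrix (Fin d) (Fin d) ℂ) :
    (gt A)ᴴ = gt (fun ℓ => (A ℓ)ᴴ) := by
  ext x y
  simp [gt, Matrix.conjTranspose_apply, map_prod]

lemma gt_one {d N : ℕ} : gt (fun _ : Fin N => (1 : Matrix (Fin d) (Fin d) ℂ)) = 1 := by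
  ext x y
  simp only [gt, Matrix.of_apply, Matrix.one_apply]
  by_cases h : x = y
  · subst h; simp
  · rw [if_neg h]
    obtain ⟨k, hk⟩ : ∃ k, x k ≠ y k := by
      by_contra hc
      push_neg at hc
      exact h (funext hc)
    exact Finset.prod_eq_zero (Finset.mem_univ k) (by simp [hk])

lemma gt_diagonal {d N : ℕ} (c : Fin N → Fin d → ℂ) :
    gt (fun k => Matrix.diagonal (c k)) =
      Matrix.diagonal (fun x : Fin N → Fin d => ∏ k, c k (x k)) := by
  ext x y
  simp only [gt, Matrix.of_apply, Matrix.diagonal_apply]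
  by_cases h : x = y
  · subst h; simp
  · rw [if_neg h]
    obtain ⟨k, hk⟩ : ∃ k, x k ≠ y k := by
      by_contra hc
      push_neg at hc
      exact h (funext hc)
    exact Finset.prod_eq_zero (Finset.mem_univ k) (by simp [hk])

lemma tensorPow_eq_gt {d N : ℕ} (A : Matrix (Fin d) (Fin d) ℂ) :
    tensorPow A N = gt (fun _ => A) := rfl

lemma siteOp_eq_gt {d N : ℕ} (Q : Matrix (Fin d) (Fin d) ℂ) (ℓ : Fin N) :
    siteOp Q N ℓ = gt (fun k => if k = ℓ then Q else 1) := by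
  ext x y
  simp only [siteOp, gt, Matrix.of_apply]
  rw [← Finset.mul_prod_erase Finset.univ _ (Finset.mem_univ ℓ)]
  rw [if_pos rfl, mul_comm]
  congr 1
  refine Finset.prod_congr rfl fun k hk => ?_
  rw [if_neg (Finset.ne_of_mem_erase hk)]
  simp [Matrix.one_apply]

section Decomp

variable {d N : ℕ} (Q : Matrix (Fin d) (Fin d) ℂ) (hQ : Q.IsHermitian)

lemma tensorPow_unitary (U : Matrix (Fin d) (Fin d) ℂ)
    (hU : U ∈ Matrix.unitaryGroup (Fin d) ℂ) :
    tensorPow U N ∈ Matrix.unitaryGroup (Fin N → Fin d) ℂ := by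
  have hUU' : Uᴴ * U = 1 := by
    have := (Matrix.mem_unitaryGroup_iff').mp hU
    rwa [Matrix.star_eq_conjTranspose] at this
  rw [Matrix.mem_unitaryGroup_iff', Matrix.star_eq_conjTranspose]
  rw [tensorPow_eq_gt, gt_conjTranspose, gt_mul]
  have : (fun ℓ : Fin N => Uᴴ * U) = fun _ => (1 : Matrix (Fin d) (Fin d) ℂ) := by
    funext ℓ; rw [hUU']
  rw [this, gt_one]

lemma siteOp_decomp (ℓ : Fin N)
    (U : Matrix (Fin d) (Fin d) ℂ) (lam : Fin d → ℝ)
    (hQspec : Q = U * Matrix.diagonal (fun i => (lam i : ℂ)) * Uᴴ)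
    (hUU : U * Uᴴ = 1) :
    siteOp Q N ℓ = tensorPow U N *
      Matrix.diagonal (fun x : Fin N → Fin d => (lam (x ℓ) : ℂ)) * (tensorPow U N)ᴴ := by
  rw [siteOp_eq_gt]
  have hfam : (fun k : Fin N => if k = ℓ then Q else 1) =
      fun k => U * Matrix.diagonal
        (if k = ℓ then (fun i => (lam i : ℂ)) else fun _ => 1) * Uᴴ := by
    funext k
    split_ifs with hk
    · exact hQspec
    · rw [Matrix.diagonal_one, mul_one, hUU]
  rw [hfam]
  rw [tensorPow_eq_gt, gt_conjTranspose]
  have hgm : gt (fun _ : Fin N => U) *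
      gt (fun k => Matrix.diagonal (if k = ℓ then (fun i => (lam i : ℂ)) else fun _ => 1)) *
      gt (fun _ : Fin N => Uᴴ) =
      gt (fun k => U * Matrix.diagonal
        (if k = ℓ then (fun i => (lam i : ℂ)) else fun _ => 1) * Uᴴ) := by
    rw [gt_mul, gt_mul]
  rw [← hgm, gt_diagonal]
  congr 2
  have hfun : (fun x : Fin N → Fin d =>
      ∏ k : Fin N, (if k = ℓ then (fun i => (lam i : ℂ)) else fun _ => 1) (x k)) =
      fun x => (lam (x ℓ) : ℂ) := by
    funext x
    have h1 : ∀ k : Fin N, (if k = ℓ then (fun i => (lam i : ℂ)) else fun _ => 1) (x k)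
        = if k = ℓ then (lam (x k) : ℂ) else 1 := by
      intro k; split_ifs <;> rfl
    rw [Finset.prod_congr rfl fun k _ => h1 k]
    rw [Finset.prod_ite_eq' Finset.univ ℓ (fun k => (lam (x k) : ℂ))]
    rw [if_pos (Finset.mem_univ ℓ)]
  rw [hfun]

lemma avgOp_decomp
    (U : Matrix (Fin d) (Fin d) ℂ) (lam : Fin d → ℝ)
    (hQspec : Q = U * Matrix.diagonal (fun i => (lam i : ℂ)) * Uᴴ)
    (hUU : U * Uᴴ = 1) :
    avgOp Q N = tensorPow U N *
      Matrix.diagonal (fun x : Fin N → Fin d =>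
        (((N : ℝ)⁻¹ * ∑ ℓ, lam (x ℓ) : ℝ) : ℂ)) * (tensorPow U N)ᴴ := by
  rw [avgOp]
  rw [Finset.sum_congr rfl fun ℓ _ => siteOp_decomp Q ℓ U lam hQspec hUU]
  rw [← Finset.sum_mul, ← Finset.mul_sum]
  have hdiagsum : ∑ ℓ : Fin N, Matrix.diagonal
      (fun x : Fin N → Fin d => (lam (x ℓ) : ℂ)) =
      Matrix.diagonal (fun x : Fin N → Fin d => ∑ ℓ, (lam (x ℓ) : ℂ)) := by
    ext x y
    simp only [Matrix.sum_apply, Matrix.diagonal_apply]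
    by_cases h : x = y
    · simp [h]
    · simp [h]
  rw [hdiagsum]
  rw [show ((N : ℂ)⁻¹ • (tensorPow U N *
      Matrix.diagonal (fun x : Fin N → Fin d => ∑ ℓ, (lam (x ℓ) : ℂ)) * (tensorPow U N)ᴴ)) =
      tensorPow U N * ((N : ℂ)⁻¹ • Matrix.diagonal
        (fun x : Fin N → Fin d => ∑ ℓ, (lam (x ℓ) : ℂ))) * (tensorPow U N)ᴴ from by
    rw [← Matrix.smul_mul, ← Matrix.mul_smul]]
  congr 2
  ext x y
  simp only [Matrix.smul_apply, Matrix.diagonal_apply, smul_eq_mul]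
  split_ifs
  · push_cast
    ring
  · ring

end Decomp


/-- Quantum Hoeffding bound: measuring the average operator
`Q̄` on the product state `γ^{⊗N}` yields an outcome within `η Σ(Q)` of
`v = Tr(γ Q)` with probability at least `1 - 2 e^{-2 η² N}`. -/
theorem hoeffding_tensor_power
    {d : ℕ} (Q γ : Matrix (Fin d) (Fin d) ℂ)
    (hQ : Q.IsHermitian) (hSigma : 0 < specDiam Q)
    (hγ : γ.PosSemidef) (hγ1 : γ.trace = 1)
    (v : ℝ) (hv : v = (Matrix.trace (γ * Q)).re)
    (η : ℝ) (hη : 0 < η) (N : ℕ) (hN : 1 ≤ N) :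
    1 - 2 * Real.exp (-2 * η ^ 2 * N) ≤
      (Matrix.trace (tensorPow γ N *
        specProj (avgOp Q N) (v - η * specDiam Q) (v + η * specDiam Q))).re := by
  classical
  -- d is positive
  have hd : 0 < d := by
    rcases Nat.eq_zero_or_pos d with h0 | h0
    · exfalso
      subst h0
      have hmax : eigMax Q = 0 := by
        rw [eigMax, dif_pos hQ]
        exact Real.iSup_of_isEmpty _
      have hmin : eigMin Q = 0 := by
        rw [eigMin, dif_pos hQ]
        exact Real.iInf_of_isEmpty _
      rw [specDiam, hmax, hmin] at hSigma
      norm_num at hSigma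
    · exact h0
  haveI : Nonempty (Fin d) := ⟨⟨0, hd⟩⟩
  set lam : Fin d → ℝ := hQ.eigenvalues with hlam_def
  set U : Matrix (Fin d) (Fin d) ℂ := (hQ.eigenvectorUnitary : Matrix (Fin d) (Fin d) ℂ)
    with hU_def
  have hUmem : U ∈ Matrix.unitaryGroup (Fin d) ℂ := hQ.eigenvectorUnitary.2
  have hUU : U * Uᴴ = 1 := by
    have := (Matrix.mem_unitaryGroup_iff).mp hUmem
    rwa [Matrix.star_eq_conjTranspose] at this
  have hUU' : Uᴴ * U = 1 := by
    have := (Matrix.mem_unitaryGroup_iff').mp hUmem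
    rwa [Matrix.star_eq_conjTranspose] at this
  have hQspec : Q = U * Matrix.diagonal (fun i => (lam i : ℂ)) * Uᴴ := by
    have := hQ.spectral_theorem
    rw [this, Unitary.conjStarAlgAut_apply]; rfl
  -- eigenvalue bounds
  set m : ℝ := eigMin Q with hm_def
  set M : ℝ := eigMax Q with hM_def
  have hSD : specDiam Q = M - m := rfl
  have hmle : ∀ i, m ≤ lam i := by
    intro i
    rw [hm_def, eigMin, dif_pos hQ]
    exact ciInf_le (Set.Finite.bddBelow (Set.finite_range _)) i
  have hMle : ∀ i, lam i ≤ M := by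
    intro i
    rw [hM_def, eigMax, dif_pos hQ]
    exact le_ciSup (Set.Finite.bddAbove (Set.finite_range _)) i
  have hs : 0 < M - m := by rw [← hSD]; exact hSigma
  -- tensor unitary
  set Vt : Matrix (Fin N → Fin d) (Fin N → Fin d) ℂ := tensorPow U N with hVt_def
  have hVtmem : Vt ∈ Matrix.unitaryGroup (Fin N → Fin d) ℂ := tensorPow_unitary U hUmem
  set μfun : (Fin N → Fin d) → ℝ := fun x => (N : ℝ)⁻¹ * ∑ ℓ, lam (x ℓ) with hμ_def
  have havg : avgOp Q N = Vt * Matrix.diagonal (fun x => ((μfun x : ℝ) : ℂ)) * Vtᴴ :=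
    avgOp_decomp Q U lam hQspec hUU
  -- spectral projector
  set f : ℝ → ℝ := Set.indicator (Set.Icc (v - η * specDiam Q) (v + η * specDiam Q))
    (fun _ => (1:ℝ)) with hf_def
  have hproj : specProj (avgOp Q N) (v - η * specDiam Q) (v + η * specDiam Q) =
      Vt * Matrix.diagonal (fun x => ((f (μfun x) : ℝ) : ℂ)) * Vtᴴ := by
    rw [specProj, havg]
    exact matFun_unitary_diag Vt hVtmem μfun f
  -- the conjugated state
  set g : Matrix (Fin d) (Fin d) ℂ := Uᴴ * γ * U with hg_def
  have hgps : g.PosSemidef := hγ.conjTranspose_mul_mul_same U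
  set p : Fin d → ℝ := fun i => (g i i).re with hp_def
  have hdiag : ∀ i, g i i = ((p i : ℝ) : ℂ) ∧ 0 ≤ p i := by
    intro i
    have h0 := hgps.dotProduct_mulVec_nonneg (Pi.single i 1)
    have hentry : star (Pi.single i 1 : Fin d → ℂ) ⬝ᵥ (g *ᵥ Pi.single i 1) = g i i := by
      simp only [dotProduct, Pi.star_apply, Matrix.mulVec_single, mul_one,
        Pi.single_apply, apply_ite (star : ℂ → ℂ), star_one, star_zero, ite_mul,
        one_mul, zero_mul]
      simp
    rw [hentry] at h0
    rw [Complex.nonneg_iff] at h0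
    constructor
    · apply Complex.ext
      · simp [hp_def]
      · rw [Complex.ofReal_im]
        exact h0.2.symm
    · exact h0.1
  have hp : ∀ i, 0 ≤ p i := fun i => (hdiag i).2
  -- trace of γ^N against the projector
  have hVGV : Vtᴴ * tensorPow γ N * Vt = tensorPow g N := by
    rw [hVt_def, tensorPow_eq_gt, tensorPow_eq_gt, tensorPow_eq_gt, gt_conjTranspose,
      gt_mul, gt_mul]
  have htr : Matrix.trace (tensorPow γ N *
      specProj (avgOp Q N) (v - η * specDiam Q) (v + η * specDiam Q)) =
      ∑ x : Fin N → Fin d, ((f (μfun x) : ℂ) * ((∏ ℓ, p (x ℓ) : ℝ) : ℂ)) := by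
    rw [hproj]
    rw [show tensorPow γ N * (Vt * Matrix.diagonal (fun x => ((f (μfun x) : ℝ) : ℂ)) * Vtᴴ)
        = (tensorPow γ N * Vt) * Matrix.diagonal (fun x => ((f (μfun x) : ℝ) : ℂ)) * Vtᴴ from by
      noncomm_ring]
    rw [Matrix.trace_mul_cycle]
    rw [show Vtᴴ * (tensorPow γ N * Vt) * Matrix.diagonal (fun x => ((f (μfun x) : ℝ) : ℂ))
        = (Vtᴴ * tensorPow γ N * Vt) * Matrix.diagonal (fun x => ((f (μfun x) : ℝ) : ℂ)) from by
      noncomm_ring]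
    rw [hVGV, Matrix.trace]
    refine Finset.sum_congr rfl fun x _ => ?_
    rw [Matrix.diag_apply, Matrix.mul_diagonal]
    rw [show (tensorPow g N) x x = ∏ ℓ, g (x ℓ) (x ℓ) from rfl]
    rw [Finset.prod_congr rfl fun ℓ _ => (hdiag (x ℓ)).1]
    rw [← Complex.ofReal_prod]
    ring
  rw [htr]
  -- real part
  have hre : (∑ x : Fin N → Fin d, ((f (μfun x) : ℂ) * ((∏ ℓ, p (x ℓ) : ℝ) : ℂ))).re =
      ∑ x : Fin N → Fin d, f (μfun x) * ∏ ℓ, p (x ℓ) := by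
    rw [Complex.re_sum]
    refine Finset.sum_congr rfl fun x _ => ?_
    rw [← Complex.ofReal_mul, Complex.ofReal_re]
  rw [hre]
  -- p sums to 1
  have hp1 : ∑ i, p i = 1 := by
    have htrg : Matrix.trace g = 1 := by
      rw [hg_def, Matrix.trace_mul_cycle, hUU, one_mul, hγ1]
    have : Matrix.trace g = ((∑ i, p i : ℝ) : ℂ) := by
      rw [Matrix.trace, Complex.ofReal_sum]
      exact Finset.sum_congr rfl fun i _ => (hdiag i).1
    rw [this] at htrg
    exact_mod_cast htrg
  -- v is the mean
  have hveq : v = ∑ i, p i * lam i := by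
    rw [hv]
    have h1 : γ * Q = γ * U * Matrix.diagonal (fun i => (lam i : ℂ)) * Uᴴ := by
      rw [hQspec]; noncomm_ring
    have h2 : Matrix.trace (γ * Q) = Matrix.trace (g * Matrix.diagonal (fun i => (lam i : ℂ))) := by
      rw [h1, Matrix.trace_mul_cycle, hg_def]
      congr 1
      noncomm_ring
    rw [h2, Matrix.trace]
    rw [show ∑ i, (g * Matrix.diagonal (fun i => (lam i : ℂ))).diag i
        = ∑ i, ((p i * lam i : ℝ) : ℂ) from Finset.sum_congr rfl fun i _ => by
      rw [Matrix.diag_apply, Matrix.mul_diagonal, (hdiag i).1, ← Complex.ofReal_mul]]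
    rw [← Complex.ofReal_sum, Complex.ofReal_re]
  -- apply the classical Hoeffding inequality
  have hclass := classical_hoeffding hN p lam hp hp1 m M hmle hMle hs v hveq η hη
  refine hclass.trans_eq ?_
  refine Finset.sum_congr rfl fun x _ => ?_
  congr 1
  rw [hf_def, hSD, Set.indicator_apply]
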